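/- Let M(X,S) be the structure monoid of a non-degenerate symmetric solution with |X| = n and Garside element Δ. Then the number of simple elements (divisors of Δ) of length k equals the binomial coefficient C(n,k); consequently the set of divisors of Δ has cardinality 2^n. -/

import Mathlib

/-- The defining relations of the structure monoid: `x y = g_x(y) f_y(x)`. -/
def structRel {X : Type*} (g f : X → X → X) :
    FreeMonoid X → FreeMonoid X → Prop :=
  fun a b => ∃ x y : X, a = FreeMonoid.of x * FreeMonoid.of y ∧
    b = FreeMonoid.of (g x y) * FreeMonoid.of (f y x)

/-- `S` acting on the first two components of `X³`. -/
def S12 {X : Type*} (S : X × X → X × X) : X × X × X → X × X × X :=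
  fun p => ((S (p.1, p.2.1)).1, (S (p.1, p.2.1)).2, p.2.2)

/-- `S` acting on the last two components of `X³`. -/
def S23 {X : Type*} (S : X × X → X × X) : X × X × X → X × X × X :=
  fun p => (p.1, (S (p.2.1, p.2.2)).1, (S (p.2.1, p.2.2)).2)

/-- The braid relation `S¹²S²³S¹² = S²³S¹²S²³`. -/
def Braided {X : Type*} (S : X × X → X × X) : Prop :=
  S12 S ∘ S23 S ∘ S12 S = S23 S ∘ S12 S ∘ S23 S

/-- `a` has length `k` in the structure monoid (the presentation is homogeneous, so the length
of any word representative computes it). -/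
def HasLen {X : Type*} (g f : X → X → X)
    (a : PresentedMonoid (structRel g f)) (k : ℕ) : Prop :=
  ∃ w : FreeMonoid X, PresentedMonoid.mk (structRel g f) w = a ∧ w.length = k

namespace Stmt7

@[ext] structure SD (X : Type*) where
  vec : X → ℕ
  perm : Equiv.Perm X

variable {X : Type*}

instance : Mul (SD X) := ⟨fun a b => ⟨a.vec + b.vec ∘ a.perm.symm, a.perm * b.perm⟩⟩
instance : One (SD X) := ⟨⟨0, 1⟩⟩

@[simp] lemma vec_mul (a b : SD X) : (a * b).vec = a.vec + b.vec ∘ a.perm.symm := rfl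
@[simp] lemma perm_mul (a b : SD X) : (a * b).perm = a.perm * b.perm := rfl
@[simp] lemma vec_one : (1 : SD X).vec = 0 := rfl
@[simp] lemma perm_one : (1 : SD X).perm = 1 := rfl

instance : Monoid (SD X) where
  mul_assoc a b c := by
    ext z
    · show (a.vec z + b.vec (a.perm.symm z)) + c.vec ((a.perm * b.perm).symm z)
        = a.vec z + (b.vec (a.perm.symm z) + c.vec (b.perm.symm (a.perm.symm z)))
      have : (a.perm * b.perm).symm z = b.perm.symm (a.perm.symm z) := rfl
      rw [this, add_assoc]
    · show ((a.perm * b.perm) * c.perm) z = (a.perm * (b.perm * c.perm)) z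
      rw [mul_assoc]
  one_mul a := by
    ext z
    · show (0 : X → ℕ) z + a.vec ((1 : Equiv.Perm X).symm z) = a.vec z
      simp; rfl
    · show ((1 : Equiv.Perm X) * a.perm) z = a.perm z
      rw [one_mul]
  mul_one a := by
    ext z
    · show a.vec z + (0 : X → ℕ) (a.perm.symm z) = a.vec z
      simp
    · show (a.perm * (1 : Equiv.Perm X)) z = a.perm z
      rw [mul_one]

open scoped Classical in
/-- indicator vector of `x` -/
noncomputable def ee (x : X) : X → ℕ := fun y => if y = x then 1 else 0

open scoped Classical in
lemma ee_apply (x y : X) : ee x y = if y = x then 1 else 0 := rfl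

@[simp] lemma ee_self (x : X) : ee x x = 1 := by rw [ee_apply, if_pos rfl]

lemma ee_of_ne {x y : X} (h : y ≠ x) : ee x y = 0 := by rw [ee_apply, if_neg h]

variable (g f : X → X → X) (hg : ∀ x : X, Function.Bijective (g x))

/-- the permutation `g x` -/
noncomputable def prm (x : X) : Equiv.Perm X := Equiv.ofBijective (g x) (hg x)

@[simp] lemma prm_apply (x y : X) : prm g hg x y = g x y := rfl

lemma ee_comp (x y : X) : ee y ∘ (prm g hg x).symm = ee (g x y) := by
  classical
  funext z
  simp only [Function.comp_apply, ee_apply]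
  rw [if_congr ((Equiv.symm_apply_eq _).trans (by rw [prm_apply])) rfl rfl]

variable (hI : ∀ x y : X, g (g x y) (f y x) = x)
  (hII : ∀ x y z : X, g x (g y z) = g (g x y) (g (f y x) z))

/-- the ESS cocycle homomorphism -/
noncomputable def phi : PresentedMonoid (structRel g f) →* SD X :=
  PresentedMonoid.lift (fun x => ⟨ee x, prm g hg x⟩) (by
    rintro a b ⟨x, y, rfl, rfl⟩
    simp only [map_mul, FreeMonoid.lift_eval_of]
    apply SD.ext
    · show ee x + ee y ∘ (prm g hg x).symm
        = ee (g x y) + ee (f y x) ∘ (prm g hg (g x y)).symm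
      rw [ee_comp, ee_comp, hI, add_comm]
    · show prm g hg x * prm g hg y = prm g hg (g x y) * prm g hg (f y x)
      apply Equiv.ext
      intro z
      simp only [Equiv.Perm.mul_apply, prm_apply]
      exact hII x y z)

/-- the vector component -/
noncomputable def pp (a : PresentedMonoid (structRel g f)) : X → ℕ :=
  (phi g f hg hI hII a).vec

lemma pp_mul (a b : PresentedMonoid (structRel g f)) :
    pp g f hg hI hII (a * b)
      = pp g f hg hI hII a + pp g f hg hI hII b ∘ (phi g f hg hI hII a).perm.symm := by
  simp only [pp, map_mul, vec_mul]

lemma pp_of (x : X) : pp g f hg hI hII (PresentedMonoid.of (structRel g f) x) = ee x := rfl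

lemma perm_of (x : X) :
    (phi g f hg hI hII (PresentedMonoid.of (structRel g f) x)).perm = prm g hg x := rfl

lemma pp_one : pp g f hg hI hII 1 = 0 := by simp [pp]

lemma pp_cons (x : X) (b : PresentedMonoid (structRel g f)) :
    pp g f hg hI hII (PresentedMonoid.of (structRel g f) x * b)
      = ee x + pp g f hg hI hII b ∘ (prm g hg x).symm := by
  rw [pp_mul, pp_of, perm_of]

/-- applying a defining relation inside the presented monoid -/
lemma rel_eq (x y : X) :
    (PresentedMonoid.of (structRel g f) x) * (PresentedMonoid.of (structRel g f) y)
      = (PresentedMonoid.of (structRel g f) (g x y))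
        * (PresentedMonoid.of (structRel g f) (f y x)) :=
  Quotient.sound (ConGen.Rel.of _ _ ⟨x, y, rfl, rfl⟩)



lemma mk_cons (x : X) (l : List X) :
    PresentedMonoid.mk (structRel g f) (FreeMonoid.ofList (x :: l))
      = PresentedMonoid.of (structRel g f) x
        * PresentedMonoid.mk (structRel g f) (FreeMonoid.ofList l) := rfl

lemma sum_ee [Fintype X] (x : X) : ∑ y, ee x y = 1 := by
  rw [Finset.sum_eq_single x (fun b _ hb => ee_of_ne hb)
    (fun h => absurd (Finset.mem_univ x) h), ee_self]

lemma sum_pp_list [Fintype X] :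
    ∀ l : List X,
      (∑ y, pp g f hg hI hII (PresentedMonoid.mk (structRel g f) (FreeMonoid.ofList l)) y)
        = l.length := by
  intro l
  induction l with
  | nil =>
      rw [show (FreeMonoid.ofList ([] : List X)) = 1 from rfl, map_one, pp_one]
      simp
  | cons x l ih =>
      rw [mk_cons, pp_cons]
      simp only [Pi.add_apply, Function.comp_apply, Finset.sum_add_distrib]
      rw [sum_ee, Equiv.sum_comp (prm g hg x).symm
        (fun y => pp g f hg hI hII (PresentedMonoid.mk (structRel g f) (FreeMonoid.ofList l)) y),
        ih]
      simp [Nat.add_comm]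

lemma hasLen_iff [Fintype X] (a : PresentedMonoid (structRel g f)) (k : ℕ) :
    HasLen g f a k ↔ (∑ y, pp g f hg hI hII a y) = k := by
  constructor
  · rintro ⟨w, rfl, rfl⟩
    rw [← FreeMonoid.ofList_toList w]
    exact sum_pp_list g f hg hI hII w.toList
  · intro h
    obtain ⟨w, rfl⟩ := PresentedMonoid.surjective_mk a
    refine ⟨w, rfl, ?_⟩
    rw [← h, ← FreeMonoid.ofList_toList w]
    exact (sum_pp_list g f hg hI hII w.toList).symm

lemma eq_one_of_pp_eq_zero [Fintype X] (a : PresentedMonoid (structRel g f))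
    (h : pp g f hg hI hII a = 0) : a = 1 := by
  obtain ⟨w, rfl⟩ := PresentedMonoid.surjective_mk a
  have hl : w.length = 0 := by
    have h2 := sum_pp_list g f hg hI hII w.toList
    rw [FreeMonoid.ofList_toList] at h2
    rw [show w.length = w.toList.length from rfl, ← h2, h]
    simp
  rw [FreeMonoid.length_eq_zero] at hl
  rw [hl, map_one]

lemma dvd_of_pos_list :
    ∀ (l : List X) (x : X),
      1 ≤ pp g f hg hI hII (PresentedMonoid.mk (structRel g f) (FreeMonoid.ofList l)) x →
        PresentedMonoid.of (structRel g f) x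
          ∣ PresentedMonoid.mk (structRel g f) (FreeMonoid.ofList l) := by
  intro l
  induction l with
  | nil =>
      intro x hx
      rw [show (FreeMonoid.ofList ([] : List X)) = 1 from rfl, map_one, pp_one] at hx
      simp at hx
  | cons y l ih =>
      intro x hx
      rw [mk_cons] at hx ⊢
      rw [pp_cons] at hx
      by_cases h : x = y
      · subst h
        exact dvd_mul_right _ _
      · have hx' : 1 ≤ pp g f hg hI hII (PresentedMonoid.mk (structRel g f) (FreeMonoid.ofList l))
            ((prm g hg y).symm x) := by
          simpa [Pi.add_apply, Function.comp_apply, ee_of_ne h] using hx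
        obtain ⟨c, hc⟩ := ih _ hx'
        refine ⟨PresentedMonoid.of (structRel g f) (f ((prm g hg y).symm x) y) * c, ?_⟩
        calc PresentedMonoid.of (structRel g f) y
              * PresentedMonoid.mk (structRel g f) (FreeMonoid.ofList l)
            = PresentedMonoid.of (structRel g f) y
              * (PresentedMonoid.of (structRel g f) ((prm g hg y).symm x) * c) := by rw [hc]
          _ = (PresentedMonoid.of (structRel g f) y
              * PresentedMonoid.of (structRel g f) ((prm g hg y).symm x)) * c := by
                rw [mul_assoc]
          _ = (PresentedMonoid.of (structRel g f) (g y ((prm g hg y).symm x))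
              * PresentedMonoid.of (structRel g f) (f ((prm g hg y).symm x) y)) * c := by
                rw [rel_eq]
          _ = PresentedMonoid.of (structRel g f) x
              * (PresentedMonoid.of (structRel g f) (f ((prm g hg y).symm x) y) * c) := by
                rw [show g y ((prm g hg y).symm x) = x from (prm g hg y).apply_symm_apply x,
                  mul_assoc]

lemma dvd_of_pos (a : PresentedMonoid (structRel g f)) (x : X)
    (hx : 1 ≤ pp g f hg hI hII a x) :
    PresentedMonoid.of (structRel g f) x ∣ a := by
  obtain ⟨w, rfl⟩ := PresentedMonoid.surjective_mk a
  rw [← FreeMonoid.ofList_toList w] at hx ⊢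
  exact dvd_of_pos_list g f hg hI hII w.toList x hx



lemma pp_cons_apply (x : X) (b : PresentedMonoid (structRel g f)) (y : X) :
    pp g f hg hI hII (PresentedMonoid.of (structRel g f) x * b) (prm g hg x y)
      = ee x (prm g hg x y) + pp g f hg hI hII b y := by
  rw [pp_cons]
  simp only [Pi.add_apply, Function.comp_apply, Equiv.symm_apply_apply]

lemma pp_le_one_of_cons {x : X} {b : PresentedMonoid (structRel g f)}
    (h : ∀ y, pp g f hg hI hII (PresentedMonoid.of (structRel g f) x * b) y ≤ 1) :
    ∀ y, pp g f hg hI hII b y ≤ 1 := by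
  intro y
  have h1 := pp_cons_apply g f hg hI hII x b y
  have h2 := h (prm g hg x y)
  omega

lemma dvd_of_le_list [Fintype X] :
    ∀ (l : List X) (b : PresentedMonoid (structRel g f)),
      (∀ y, pp g f hg hI hII (PresentedMonoid.mk (structRel g f) (FreeMonoid.ofList l)) y
        ≤ pp g f hg hI hII b y) →
      (∀ y, pp g f hg hI hII b y ≤ 1) →
      PresentedMonoid.mk (structRel g f) (FreeMonoid.ofList l) ∣ b := by
  intro l
  induction l with
  | nil =>
      intro b _ _
      rw [show (FreeMonoid.ofList ([] : List X)) = 1 from rfl, map_one]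
      exact one_dvd b
  | cons x l ih =>
      intro b hle hb1
      have hself : 1 ≤ pp g f hg hI hII
          (PresentedMonoid.mk (structRel g f) (FreeMonoid.ofList (x :: l))) x := by
        rw [mk_cons, pp_cons]
        simp only [Pi.add_apply, ee_self, Function.comp_apply]
        omega
      obtain ⟨b₁, rfl⟩ := dvd_of_pos g f hg hI hII b x (le_trans hself (hle x))
      have hle' : ∀ y,
          pp g f hg hI hII (PresentedMonoid.mk (structRel g f) (FreeMonoid.ofList l)) y
            ≤ pp g f hg hI hII b₁ y := by
        intro y
        have h1 := hle (prm g hg x y)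
        rw [mk_cons] at h1
        have h2 := pp_cons_apply g f hg hI hII x
          (PresentedMonoid.mk (structRel g f) (FreeMonoid.ofList l)) y
        have h3 := pp_cons_apply g f hg hI hII x b₁ y
        omega
      obtain ⟨c, rfl⟩ := ih b₁ hle' (pp_le_one_of_cons g f hg hI hII hb1)
      exact ⟨c, by rw [mk_cons, mul_assoc]⟩

lemma eq_of_pp_eq_list [Fintype X] :
    ∀ (l : List X) (b : PresentedMonoid (structRel g f)),
      pp g f hg hI hII (PresentedMonoid.mk (structRel g f) (FreeMonoid.ofList l))
        = pp g f hg hI hII b →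
      (∀ y, pp g f hg hI hII b y ≤ 1) →
      PresentedMonoid.mk (structRel g f) (FreeMonoid.ofList l) = b := by
  intro l
  induction l with
  | nil =>
      intro b heq _
      rw [show (FreeMonoid.ofList ([] : List X)) = 1 from rfl, map_one]
      symm
      apply eq_one_of_pp_eq_zero g f hg hI hII
      rw [← heq, show (FreeMonoid.ofList ([] : List X)) = 1 from rfl, map_one, pp_one]
  | cons x l ih =>
      intro b heq hb1
      have hself : 1 ≤ pp g f hg hI hII
          (PresentedMonoid.mk (structRel g f) (FreeMonoid.ofList (x :: l))) x := by
        rw [mk_cons, pp_cons]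
        simp only [Pi.add_apply, ee_self, Function.comp_apply]
        omega
      obtain ⟨b₁, rfl⟩ := dvd_of_pos g f hg hI hII b x (heq ▸ hself)
      have heq' : pp g f hg hI hII (PresentedMonoid.mk (structRel g f) (FreeMonoid.ofList l))
          = pp g f hg hI hII b₁ := by
        funext y
        have h1 : pp g f hg hI hII
            (PresentedMonoid.mk (structRel g f) (FreeMonoid.ofList (x :: l))) (prm g hg x y)
            = pp g f hg hI hII (PresentedMonoid.of (structRel g f) x * b₁) (prm g hg x y) := by
          rw [heq]
        rw [mk_cons] at h1
        have h2 := pp_cons_apply g f hg hI hII x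
          (PresentedMonoid.mk (structRel g f) (FreeMonoid.ofList l)) y
        have h3 := pp_cons_apply g f hg hI hII x b₁ y
        omega
      rw [mk_cons, ih b₁ heq' (pp_le_one_of_cons g f hg hI hII hb1)]

lemma eq_of_pp_eq [Fintype X] (a b : PresentedMonoid (structRel g f))
    (heq : pp g f hg hI hII a = pp g f hg hI hII b)
    (hb1 : ∀ y, pp g f hg hI hII b y ≤ 1) : a = b := by
  obtain ⟨w, rfl⟩ := PresentedMonoid.surjective_mk a
  rw [← FreeMonoid.ofList_toList w] at heq ⊢
  exact eq_of_pp_eq_list g f hg hI hII w.toList b heq hb1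

lemma dvd_of_le [Fintype X] (a b : PresentedMonoid (structRel g f))
    (hle : ∀ y, pp g f hg hI hII a y ≤ pp g f hg hI hII b y)
    (hb1 : ∀ y, pp g f hg hI hII b y ≤ 1) : a ∣ b := by
  obtain ⟨w, rfl⟩ := PresentedMonoid.surjective_mk a
  rw [← FreeMonoid.ofList_toList w] at hle ⊢
  exact dvd_of_le_list g f hg hI hII w.toList b hle hb1

lemma pp_surj [Fintype X] :
    ∀ (n : ℕ) (v : X → ℕ), (∑ y, v y) = n → ∃ a, pp g f hg hI hII a = v := by
  intro n
  induction n using Nat.strong_induction_on with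
  | _ n ih =>
    intro v hv
    rcases Nat.eq_zero_or_pos n with h0 | hpos
    · subst h0
      refine ⟨1, ?_⟩
      rw [pp_one]
      funext y
      exact ((Finset.sum_eq_zero_iff.mp hv) y (Finset.mem_univ y)).symm
    · obtain ⟨x, hx⟩ : ∃ x, 1 ≤ v x := by
        by_contra hc
        push_neg at hc
        have : (∑ y, v y) = 0 := Finset.sum_eq_zero (fun y _ => by have := hc y; omega)
        omega
      have hpt : ∀ y, v y = ee x y + (v y - ee x y) := by
        intro y
        by_cases h : y = x
        · subst h; rw [ee_self]; omega
        · rw [ee_of_ne h]; omega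
      have hsum : (∑ y, (v y - ee x y)) = n - 1 := by
        have h1 : (∑ y, v y) = (∑ y, ee x y) + ∑ y, (v y - ee x y) := by
          rw [← Finset.sum_add_distrib]
          exact Finset.sum_congr rfl (fun y _ => hpt y)
        rw [sum_ee] at h1
        omega
      obtain ⟨a', ha'⟩ := ih (n - 1) (by omega) (fun y => v (prm g hg x y) - ee x (prm g hg x y))
        (by rw [Equiv.sum_comp (prm g hg x) (fun y => v y - ee x y), hsum])
      refine ⟨PresentedMonoid.of (structRel g f) x * a', ?_⟩
      rw [pp_cons, ha']
      funext y
      simp only [Pi.add_apply, Function.comp_apply, Equiv.apply_symm_apply]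
      have := hpt y
      omega

end Stmt7

open Stmt7

set_option linter.unusedVariables false in
/-- the number of simple elements (divisors of the Garside element `Δ`) of length
`k` in `M(X,S)` is `C(n,k)`, where `n = |X|`; consequently the set of divisors of `Δ` has
cardinality `2^n`. -/
theorem stmt_7 {X : Type*} [Fintype X]
    (S : X × X → X × X) (g f : X → X → X)
    (hS : ∀ x y : X, S (x, y) = (g x y, f y x))
    (hg : ∀ x : X, Function.Bijective (g x))
    (hf : ∀ x : X, Function.Bijective (f x))
    (hinv : ∀ p : X × X, S (S p) = p)
    (hbr : Braided S)
    (Δ : PresentedMonoid (structRel g f))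
    (hΔdvd : ∀ x : X, PresentedMonoid.of (structRel g f) x ∣ Δ)
    (hΔlcm : ∀ m : PresentedMonoid (structRel g f),
      (∀ x : X, PresentedMonoid.of (structRel g f) x ∣ m) → Δ ∣ m) :
    (∀ k : ℕ,
        Nat.card {a : PresentedMonoid (structRel g f) // a ∣ Δ ∧ HasLen g f a k}
          = (Fintype.card X).choose k) ∧
      Nat.card {a : PresentedMonoid (structRel g f) // a ∣ Δ} = 2 ^ Fintype.card X := by
  classical
  -- derive the two identities needed for the cocycle homomorphism
  have hI : ∀ x y : X, g (g x y) (f y x) = x := by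
    intro x y
    have h := hinv (x, y)
    rw [hS, hS] at h
    exact congrArg Prod.fst h
  have hII : ∀ x y z : X, g x (g y z) = g (g x y) (g (f y x) z) := by
    intro x y z
    have h := congrFun hbr (x, y, z)
    simp only [Function.comp_apply, S12, S23, hS] at h
    exact (congrArg Prod.fst h).symm
  set P := pp g f hg hI hII with hP
  set n := Fintype.card X with hn
  -- the Garside element has cocycle vector all-ones
  have hΔ1 : ∀ x : X, 1 ≤ P Δ x := by
    intro x
    obtain ⟨d, hd⟩ := hΔdvd x
    rw [hd, hP, pp_cons]
    simp only [Pi.add_apply, ee_self, Function.comp_apply]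
    omega
  obtain ⟨b, hb⟩ := pp_surj g f hg hI hII n (fun _ => 1)
    (by simp [Finset.sum_const, Finset.card_univ, hn])
  obtain ⟨c, hc⟩ := hΔlcm b (fun x => dvd_of_pos g f hg hI hII b x (by rw [hb]))
  have hsumb : (∑ y, P b y) = n := by
    rw [hP, hb]
    simp [Finset.sum_const, Finset.card_univ, hn]
  have hsplit : (∑ y, P b y) = (∑ y, P Δ y) + ∑ y, P c y := by
    rw [hc, hP, pp_mul]
    simp only [Pi.add_apply, Function.comp_apply, Finset.sum_add_distrib]
    rw [Equiv.sum_comp (phi g f hg hI hII Δ).perm.symm (fun y => pp g f hg hI hII c y)]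
  have hsumΔ_ge : n ≤ ∑ y, P Δ y := by
    calc n = ∑ _y : X, 1 := by simp [Finset.sum_const, Finset.card_univ, hn]
    _ ≤ ∑ y, P Δ y := Finset.sum_le_sum (fun y _ => hΔ1 y)
  have hsumΔ : (∑ y, P Δ y) = n := by omega
  have hΔle1 : ∀ x : X, P Δ x ≤ 1 := by
    intro x
    by_contra hcon
    push_neg at hcon
    have hlt : (∑ _y : X, 1) < ∑ y, P Δ y :=
      Finset.sum_lt_sum (fun y _ => hΔ1 y) ⟨x, Finset.mem_univ x, hcon⟩
    simp [Finset.sum_const, Finset.card_univ, ← hn] at hlt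
    omega
  -- characterization of the divisors of Δ
  have hchar : ∀ a : PresentedMonoid (structRel g f), a ∣ Δ ↔ ∀ y, P a y ≤ 1 := by
    intro a
    constructor
    · rintro ⟨c', hc'⟩ y
      have h1 : P Δ y = P a y + P c' ((phi g f hg hI hII a).perm.symm y) := by
        rw [hc', hP, pp_mul]; rfl
      have := hΔle1 y
      omega
    · intro h1
      exact dvd_of_le g f hg hI hII a Δ (fun y => le_trans (h1 y) (hΔ1 y)) hΔle1
  -- the finset of an element
  have card_toSet : ∀ a : PresentedMonoid (structRel g f), (∀ y, P a y ≤ 1) →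
      (Finset.univ.filter (fun x => P a x = 1)).card = ∑ y, P a y := by
    intro a h1
    rw [Finset.card_filter]
    refine Finset.sum_congr rfl (fun y _ => ?_)
    have := h1 y
    by_cases h : P a y = 1
    · simp [h]
    · have h0 : P a y = 0 := by omega
      simp [h, h0]
  have mem_toSet : ∀ (a : PresentedMonoid (structRel g f)) (x : X),
      x ∈ Finset.univ.filter (fun x => P a x = 1) ↔ P a x = 1 := by
    intro a x; simp
  -- injectivity of toSet on divisors
  have inj : ∀ a b : PresentedMonoid (structRel g f), a ∣ Δ → b ∣ Δ →
      Finset.univ.filter (fun x => P a x = 1) = Finset.univ.filter (fun x => P b x = 1) →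
      a = b := by
    intro a b ha hb hab
    refine eq_of_pp_eq g f hg hI hII a b ?_ ((hchar b).mp hb)
    funext y
    have h1 := (hchar a).mp ha y
    have h2 := (hchar b).mp hb y
    have h3 : P a y = 1 ↔ P b y = 1 := by
      rw [← mem_toSet a y, ← mem_toSet b y, hab]
    show P a y = P b y
    by_cases hy : P a y = 1
    · rw [hy, h3.mp hy]
    · have h4 : ¬ P b y = 1 := fun hb' => hy (h3.mpr hb')
      omega
  -- surjectivity onto finsets
  have surj : ∀ A : Finset X, ∃ a : PresentedMonoid (structRel g f),
      P a = (fun x => if x ∈ A then 1 else 0) ∧ a ∣ Δ ∧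
      Finset.univ.filter (fun x => P a x = 1) = A := by
    intro A
    obtain ⟨a, ha⟩ := pp_surj g f hg hI hII (∑ y, if y ∈ A then 1 else 0)
      (fun x => if x ∈ A then 1 else 0) rfl
    refine ⟨a, ha, ?_, ?_⟩
    · rw [hchar]
      intro y
      rw [hP, ha]
      by_cases h : y ∈ A <;> simp [h]
    · ext x
      rw [mem_toSet, hP, ha]
      by_cases h : x ∈ A <;> simp [h]
  have lenP : ∀ (a : PresentedMonoid (structRel g f)) (k : ℕ),
      HasLen g f a k ↔ (∑ y, P a y) = k := fun a k => hasLen_iff g f hg hI hII a k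
  constructor
  · intro k
    have hbij : Function.Bijective
        (fun a : {a : PresentedMonoid (structRel g f) // a ∣ Δ ∧ HasLen g f a k} =>
          (⟨Finset.univ.filter (fun x => P a.1 x = 1), by
            obtain ⟨a, ha, hl⟩ := a
            rw [card_toSet a ((hchar a).mp ha)]
            exact (lenP a k).mp hl⟩ : {A : Finset X // A.card = k})) := by
      constructor
      · rintro ⟨a, ha, hla⟩ ⟨b, hb, hlb⟩ h
        exact Subtype.ext (inj a b ha hb (congrArg Subtype.val h))
      · rintro ⟨A, hA⟩
        obtain ⟨a, ha, hdvd, hfil⟩ := surj A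
        have hlen : HasLen g f a k := by
          rw [lenP, ← card_toSet a ((hchar a).mp hdvd), hfil, hA]
        exact ⟨⟨a, hdvd, hlen⟩, Subtype.ext hfil⟩
    rw [Nat.card_eq_of_bijective _ hbij, Nat.card_eq_fintype_card, Fintype.card_finset_len]
  · have hbij : Function.Bijective
        (fun a : {a : PresentedMonoid (structRel g f) // a ∣ Δ} =>
          Finset.univ.filter (fun x => P a.1 x = 1)) := by
      constructor
      · rintro ⟨a, ha⟩ ⟨b, hb⟩ h
        exact Subtype.ext (inj a b ha hb h)
      · intro A
        obtain ⟨a, ha, hdvd, hfil⟩ := surj A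
        exact ⟨⟨a, hdvd⟩, hfil⟩
    rw [Nat.card_eq_of_bijective _ hbij, Nat.card_eq_fintype_card, Fintype.card_finset]
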